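/- arXiv:2205.13426 — 2 statements merged into one kernel-verified Lean document; each statement's English description precedes it below -/
import Mathlib

section
/- Let n ≥ 2, let G be a simple graph on a vertex set V with |V| = n, let p : {1,...,9} → ℝ satisfy p_d > 0 for all d and ∑_{d=1}^9 p_d = 1, set δ = min_d p_d, and fix 0 < ε < 1. Assign to each edge f of G an independent random digit D_f ∈ {1,...,9} with P(D_f = d) = p_d (i.e., the digits are distributed according to the product measure over the edges). For S ⊆ V let e(S) be the number of edges of G with both endpoints in S and let X_{S,d} be the number of such edges f with D_f = d. Then the probability that there exist a digit d ∈ {1,...,9} and a set S ⊆ V with e(S) ≥ (18/(δ·ε²))·|S|·log n and |X_{S,d} − p_d·e(S)| > ε·p_d·e(S) is at most 18·∑_{k=2}^{n} C(n,k)·n^{−6k}. -/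
open MeasureTheory ProbabilityTheory
open scoped Classical


lemma log_one_add_ge {x : ℝ} (h0 : 0 ≤ x) (h1 : x ≤ 1) : 2*x/3 ≤ Real.log (1+x) := by
  rw [Real.le_log_iff_exp_le (by linarith)]
  have hb : Real.exp (2*x/3) ≤ (∑ m ∈ Finset.range 2, (2*x/3) ^ m / m.factorial)
      + (2*x/3)^2 * (2+1) / ((Nat.factorial 2 : ℝ) * 2) :=
    Real.exp_bound' (by linarith) (by linarith) (by norm_num)
  simp only [Finset.sum_range_succ, Finset.sum_range_zero, Nat.factorial] at hb
  norm_num at hb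
  nlinarith [sq_nonneg x, sq_nonneg (1-x)]

lemma chernoff_ineq_upper {x : ℝ} (h0 : 0 ≤ x) (h1 : x ≤ 1) :
    x^2/3 ≤ (1+x) * Real.log (1+x) - x := by
  set f : ℝ → ℝ := fun y => (1+y) * Real.log (1+y) - y - y^2/3 with hf
  have hder : ∀ y : ℝ, 0 ≤ y → HasDerivAt f (Real.log (1+y) - 2*y/3) y := by
    intro y hy
    have h1y : (0:ℝ) < 1 + y := by linarith
    have hadd : HasDerivAt (fun y : ℝ => 1 + y) 1 y := by
      simpa using (hasDerivAt_id y).const_add 1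
    have hlog : HasDerivAt (fun y : ℝ => Real.log (1+y)) (1/(1+y)) y := by
      simpa [Function.comp_def] using (Real.hasDerivAt_log h1y.ne').comp y hadd
    have hmul := hadd.mul hlog
    have H := (hmul.sub (hasDerivAt_id y)).sub ((hasDerivAt_pow 2 y).div_const 3)
    convert H using 1
    case e'_4 => rfl
    case e'_5 => rfl
    case e'_8 => rfl
    all_goals (field_simp; try ring)
  have hmono : MonotoneOn f (Set.Icc 0 1) := by
    apply monotoneOn_of_deriv_nonneg (convex_Icc 0 1)
    · intro y hy
      exact (hder y hy.1).continuousAt.continuousWithinAt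
    · rw [interior_Icc]
      intro y hy
      exact (hder y hy.1.le).differentiableAt.differentiableWithinAt
    · rw [interior_Icc]
      intro y hy
      rw [(hder y hy.1.le).deriv]
      have := log_one_add_ge hy.1.le hy.2.le
      linarith
  have h := hmono (Set.mem_Icc.mpr ⟨le_refl 0, zero_le_one⟩) (Set.mem_Icc.mpr ⟨h0, h1⟩) h0
  simp only [hf] at h
  norm_num [Real.log_one] at h
  linarith

lemma chernoff_ineq_lower {x : ℝ} (h0 : 0 ≤ x) (h1 : x < 1) :
    x^2/3 ≤ x + (1-x) * Real.log (1-x) := by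
  rcases eq_or_lt_of_le h0 with rfl | hx0
  · norm_num
  set g : ℝ → ℝ := fun y => y + (1-y) * Real.log (1-y) - y^2/2 with hg
  have hder : ∀ y : ℝ, y < 1 → HasDerivAt g (-Real.log (1-y) - y) y := by
    intro y hy
    have h1y : (0:ℝ) < 1 - y := by linarith
    have hsub : HasDerivAt (fun y : ℝ => 1 - y) (-1) y := by
      simpa using ((hasDerivAt_id y).const_sub 1)
    have hlog : HasDerivAt (fun y : ℝ => Real.log (1-y)) ((1-y)⁻¹ * (-1)) y := by
      simpa [Function.comp_def] using (Real.hasDerivAt_log h1y.ne').comp y hsub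
    have hmul := hsub.mul hlog
    have H := ((hasDerivAt_id y).add hmul).sub ((hasDerivAt_pow 2 y).div_const 2)
    convert H using 1
    case e'_4 => rfl
    case e'_5 => rfl
    case e'_8 => rfl
    all_goals (field_simp; try ring)
  have hmono : MonotoneOn g (Set.Icc 0 x) := by
    apply monotoneOn_of_deriv_nonneg (convex_Icc 0 x)
    · intro y hy
      exact (hder y (lt_of_le_of_lt hy.2 h1)).continuousAt.continuousWithinAt
    · rw [interior_Icc]
      intro y hy
      exact (hder y (lt_of_lt_of_le hy.2 h1.le)).differentiableAt.differentiableWithinAt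
    · rw [interior_Icc]
      intro y hy
      have hy1 : y < 1 := lt_of_lt_of_le hy.2 h1.le
      rw [(hder y hy1).deriv]
      have : Real.log (1-y) ≤ (1-y) - 1 := Real.log_le_sub_one_of_pos (by linarith)
      linarith
  have h := hmono (Set.mem_Icc.mpr ⟨le_refl 0, h0⟩) (Set.mem_Icc.mpr ⟨h0, le_refl x⟩) h0
  simp only [hg] at h
  norm_num [Real.log_one] at h
  nlinarith [sq_nonneg x]



lemma mgf_ite' {Ω : Type*} [MeasurableSpace Ω] (μ : Measure Ω) [IsProbabilityMeasure μ]
    {A : Set Ω} (hA : MeasurableSet A) {q : ℝ} (hq0 : 0 ≤ q)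
    (hq : μ A = ENNReal.ofReal q) (t : ℝ) :
    mgf (fun ω => if ω ∈ A then (1:ℝ) else 0) μ t = 1 + q * (Real.exp t - 1) := by
  have hint : Integrable (fun ω => if ω ∈ A then (1:ℝ) else 0) μ := by
    exact (integrable_const (1:ℝ)).indicator hA
  have key : (fun ω => Real.exp (t * (if ω ∈ A then (1:ℝ) else 0)))
      = fun ω => 1 + (Real.exp t - 1) * (if ω ∈ A then (1:ℝ) else 0) := by
    funext ω; by_cases h : ω ∈ A <;> simp [h]
  have hI : ∫ ω, (if ω ∈ A then (1:ℝ) else 0) ∂μ = q := by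
    have h1 : ∫ ω, Set.indicator A (fun _ => (1:ℝ)) ω ∂μ = (μ A).toReal • (1:ℝ) :=
      integral_indicator_const (1:ℝ) hA
    simpa [Set.indicator_apply, hq, ENNReal.toReal_ofReal hq0] using h1
  unfold mgf
  rw [key, integral_add (integrable_const 1) (hint.const_mul _), integral_const,
    integral_const_mul, hI]
  simp [measure_univ]
  ring

lemma chernoff_int {Ω : Type*} [MeasurableSpace Ω] {μ : Measure Ω} [IsProbabilityMeasure μ]
    {ι : Type*} {Y : ι → Ω → ℝ} (hYmeas : ∀ i, Measurable (Y i))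
    (h01 : ∀ i ω, Y i ω = 0 ∨ Y i ω = 1) (t : ℝ) (i : ι) :
    Integrable (fun ω => Real.exp (t * Y i ω)) μ := by
  refine (integrable_const (Real.exp |t|)).mono'
    (((hYmeas i).const_mul t).exp.aestronglyMeasurable) (ae_of_all _ fun ω => ?_)
  rw [Real.norm_eq_abs, Real.abs_exp]
  apply Real.exp_le_exp.mpr
  rcases h01 i ω with h | h <;> simp [h, abs_nonneg, le_abs_self]

lemma chernoff_upper
    {Ω : Type*} [MeasurableSpace Ω] {μ : Measure Ω} [IsProbabilityMeasure μ]
    {ι : Type*} {Y : ι → Ω → ℝ}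
    (hYmeas : ∀ i, Measurable (Y i))
    (hindep : iIndepFun Y μ)
    {q : ℝ} (hq0 : 0 ≤ q) (hq1 : q ≤ 1)
    (h01 : ∀ i ω, Y i ω = 0 ∨ Y i ω = 1)
    (hmgf : ∀ i t, mgf (Y i) μ t = 1 + q * (Real.exp t - 1))
    (s : Finset ι) {ε : ℝ} (hε0 : 0 < ε) (hε1 : ε < 1) :
    (μ {ω | (1+ε) * (q * s.card) ≤ (∑ i ∈ s, Y i) ω}).toReal
      ≤ Real.exp (-(ε^2 * (q * s.card)) / 3) := by
  set t := Real.log (1+ε) with ht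
  have h1ε : (0:ℝ) < 1 + ε := by linarith
  have ht0 : 0 ≤ t := Real.log_nonneg (by linarith)
  have hexpt : Real.exp t = 1 + ε := Real.exp_log h1ε
  have hintsum : Integrable (fun ω => Real.exp (t * (∑ i ∈ s, Y i) ω)) μ :=
    hindep.integrable_exp_mul_sum hYmeas (fun i _ => chernoff_int hYmeas h01 t i)
  have hcb := measure_ge_le_exp_mul_mgf ((1+ε) * (q * s.card)) ht0 hintsum
  rw [hindep.mgf_sum hYmeas s] at hcb
  have hprod : ∏ i ∈ s, mgf (Y i) μ t = (1 + q*(Real.exp t - 1))^s.card := by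
    rw [Finset.prod_congr rfl (fun i _ => hmgf i t), Finset.prod_const]
  rw [hprod] at hcb
  refine hcb.trans ?_
  have hbase0 : 0 ≤ 1 + q * (Real.exp t - 1) := by nlinarith [Real.exp_pos t]
  have hpow : (1 + q*(Real.exp t - 1))^s.card ≤ Real.exp (s.card * (q * (Real.exp t - 1))) := by
    calc (1 + q*(Real.exp t - 1))^s.card ≤ (Real.exp (q * (Real.exp t - 1)))^s.card := by
          apply pow_le_pow_left₀ hbase0
          linarith [Real.add_one_le_exp (q * (Real.exp t - 1))]
      _ = Real.exp (s.card * (q * (Real.exp t - 1))) := by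
          rw [← Real.exp_nat_mul]
  calc Real.exp (-t * ((1+ε)*(q*s.card))) * (1 + q*(Real.exp t - 1))^s.card
      ≤ Real.exp (-t * ((1+ε)*(q*s.card))) * Real.exp (s.card * (q*(Real.exp t - 1))) :=
        mul_le_mul_of_nonneg_left hpow (Real.exp_pos _).le
    _ = Real.exp (q * s.card * (ε - (1+ε) * t)) := by
        rw [← Real.exp_add]; congr 1; rw [hexpt]; ring
    _ ≤ Real.exp (-(ε^2 * (q * s.card)) / 3) := by
        apply Real.exp_le_exp.mpr
        have h := chernoff_ineq_upper hε0.le hε1.le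
        have hqs : 0 ≤ q * (s.card:ℝ) := mul_nonneg hq0 (Nat.cast_nonneg _)
        nlinarith [mul_le_mul_of_nonneg_left (by linarith : ε - (1+ε)*t ≤ -(ε^2/3)) hqs]

lemma chernoff_lower
    {Ω : Type*} [MeasurableSpace Ω] {μ : Measure Ω} [IsProbabilityMeasure μ]
    {ι : Type*} {Y : ι → Ω → ℝ}
    (hYmeas : ∀ i, Measurable (Y i))
    (hindep : iIndepFun Y μ)
    {q : ℝ} (hq0 : 0 ≤ q) (hq1 : q ≤ 1)
    (h01 : ∀ i ω, Y i ω = 0 ∨ Y i ω = 1)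
    (hmgf : ∀ i t, mgf (Y i) μ t = 1 + q * (Real.exp t - 1))
    (s : Finset ι) {ε : ℝ} (hε0 : 0 < ε) (hε1 : ε < 1) :
    (μ {ω | (∑ i ∈ s, Y i) ω ≤ (1-ε) * (q * s.card)}).toReal
      ≤ Real.exp (-(ε^2 * (q * s.card)) / 3) := by
  set t := Real.log (1-ε) with ht
  have h1ε : (0:ℝ) < 1 - ε := by linarith
  have ht0 : t ≤ 0 := Real.log_nonpos (by linarith) (by linarith)
  have hexpt : Real.exp t = 1 - ε := Real.exp_log h1ε
  have hintsum : Integrable (fun ω => Real.exp (t * (∑ i ∈ s, Y i) ω)) μ :=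
    hindep.integrable_exp_mul_sum hYmeas (fun i _ => chernoff_int hYmeas h01 t i)
  have hcb := measure_le_le_exp_mul_mgf ((1-ε) * (q * s.card)) ht0 hintsum
  rw [hindep.mgf_sum hYmeas s] at hcb
  have hprod : ∏ i ∈ s, mgf (Y i) μ t = (1 + q*(Real.exp t - 1))^s.card := by
    rw [Finset.prod_congr rfl (fun i _ => hmgf i t), Finset.prod_const]
  rw [hprod] at hcb
  refine hcb.trans ?_
  have hbase0 : 0 ≤ 1 + q * (Real.exp t - 1) := by nlinarith [Real.exp_pos t]
  have hpow : (1 + q*(Real.exp t - 1))^s.card ≤ Real.exp (s.card * (q * (Real.exp t - 1))) := by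
    calc (1 + q*(Real.exp t - 1))^s.card ≤ (Real.exp (q * (Real.exp t - 1)))^s.card := by
          apply pow_le_pow_left₀ hbase0
          linarith [Real.add_one_le_exp (q * (Real.exp t - 1))]
      _ = Real.exp (s.card * (q * (Real.exp t - 1))) := by
          rw [← Real.exp_nat_mul]
  calc Real.exp (-t * ((1-ε)*(q*s.card))) * (1 + q*(Real.exp t - 1))^s.card
      ≤ Real.exp (-t * ((1-ε)*(q*s.card))) * Real.exp (s.card * (q*(Real.exp t - 1))) :=
        mul_le_mul_of_nonneg_left hpow (Real.exp_pos _).le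
    _ = Real.exp (q * s.card * (-ε - (1-ε) * t)) := by
        rw [← Real.exp_add]; congr 1; rw [hexpt]; ring
    _ ≤ Real.exp (-(ε^2 * (q * s.card)) / 3) := by
        apply Real.exp_le_exp.mpr
        have h := chernoff_ineq_lower hε0.le hε1
        have hqs : 0 ≤ q * (s.card:ℝ) := mul_nonneg hq0 (Nat.cast_nonneg _)
        nlinarith [mul_le_mul_of_nonneg_left (by linarith : -ε - (1-ε)*t ≤ -(ε^2/3)) hqs]

/-- **Theorem 3 of the paper** (with explicit union-bound failure probability).
Assign to each edge of a simple graph `G` on `n ≥ 2` vertices an independent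
random digit in `{1,…,9}` with distribution `p`, and let `δ = min_d p_d`.
For `S ⊆ V` let `e(S)` be the number of edges induced by `S` and `X_{S,d}` the
number of such edges carrying digit `d`.  Then the probability that some digit
`d` and some `S` with `e(S) ≥ (18/(δ·ε²))·|S|·log n` satisfy
`|X_{S,d} − p_d·e(S)| > ε·p_d·e(S)` is at most
`18·∑_{k=2}^{n} C(n,k)·n^(−6k)`. -/
theorem antibenford_concentration
    {V : Type*} [Fintype V] [DecidableEq V]
    (n : ℕ) (hn : 2 ≤ n) (hcard : Fintype.card V = n)
    (G : SimpleGraph V) [DecidableRel G.Adj]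
    {Ω : Type*} [MeasurableSpace Ω] (μ : Measure Ω) [IsProbabilityMeasure μ]
    (p : Fin 9 → ℝ) (hp : ∀ d, 0 < p d) (hsum : ∑ d, p d = 1)
    (δ : ℝ) (hδ : δ = Finset.univ.inf' Finset.univ_nonempty p)
    (ε : ℝ) (hε0 : 0 < ε) (hε1 : ε < 1)
    (D : G.edgeSet → Ω → Fin 9)
    (hmeas : ∀ f, Measurable (D f))
    (hindep : iIndepFun D μ)
    (hdist : ∀ f d, μ {ω | D f ω = d} = ENNReal.ofReal (p d)) :
    (μ {ω | ∃ d : Fin 9, ∃ S : Finset V,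
        (18 / (δ * ε ^ 2)) * S.card * Real.log n
            ≤ ((Finset.univ.filter
                (fun f : G.edgeSet => ∀ v ∈ (f : Sym2 V), v ∈ S)).card : ℝ)
        ∧ ε * (p d * ((Finset.univ.filter
                (fun f : G.edgeSet => ∀ v ∈ (f : Sym2 V), v ∈ S)).card : ℝ))
          < |((Finset.univ.filter
                (fun f : G.edgeSet =>
                  (∀ v ∈ (f : Sym2 V), v ∈ S) ∧ D f ω = d)).card : ℝ)
              - p d * ((Finset.univ.filter
                (fun f : G.edgeSet => ∀ v ∈ (f : Sym2 V), v ∈ S)).card : ℝ)|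
        }).toReal
      ≤ 18 * ∑ k ∈ Finset.Icc 2 n, (n.choose k : ℝ) * ((n : ℝ) ^ (6 * k))⁻¹ := by
  -- basic facts
  have hδ0 : 0 < δ := by
    rw [hδ]
    exact (Finset.lt_inf'_iff _).mpr (fun d _ => hp d)
  have hδle : ∀ d, δ ≤ p d := fun d => hδ ▸ Finset.inf'_le _ (Finset.mem_univ d)
  have hp1 : ∀ d, p d ≤ 1 := by
    intro d
    rw [← hsum]
    exact Finset.single_le_sum (fun i _ => (hp i).le) (Finset.mem_univ d)
  have hn1 : (1:ℝ) < (n:ℝ) := by exact_mod_cast hn.trans_lt' (by norm_num)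
  have hlogn : 0 < Real.log n := Real.log_pos hn1
  have hn0 : (0:ℝ) < (n:ℝ) := by linarith
  set C : ℝ := 18 / (δ * ε ^ 2) with hC
  have hC0 : 0 < C := by
    apply div_pos (by norm_num)
    positivity
  -- the random variables
  set E : Finset V → Finset G.edgeSet :=
    fun S => Finset.univ.filter (fun f : G.edgeSet => ∀ v ∈ (f : Sym2 V), v ∈ S) with hE
  set Y : Fin 9 → G.edgeSet → Ω → ℝ :=
    fun d f => (fun x : Fin 9 => if x = d then (1:ℝ) else 0) ∘ D f with hYdef
  have hYval : ∀ d f ω, Y d f ω = if D f ω = d then (1:ℝ) else 0 := fun d f ω => rfl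
  have hYmeas : ∀ d f, Measurable (Y d f) := fun d f =>
    (measurable_of_countable _).comp (hmeas f)
  have hYindep : ∀ d, iIndepFun (Y d) μ :=
    fun d => hindep.comp _ (fun _ => measurable_of_countable _)
  have hY01 : ∀ d f ω, Y d f ω = 0 ∨ Y d f ω = 1 := by
    intro d f ω
    rw [hYval]
    by_cases h : D f ω = d <;> simp [h]
  have hYmgf : ∀ d f t, mgf (Y d f) μ t = 1 + p d * (Real.exp t - 1) := by
    intro d f t
    have hA : MeasurableSet {ω | D f ω = d} := by
      have := (hmeas f) (MeasurableSet.singleton d)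
      simpa [Set.preimage, Set.mem_singleton_iff] using this
    have hmg := mgf_ite' μ hA (hp d).le (hdist f d) t
    refine Eq.trans ?_ hmg
    apply congrArg (fun g => mgf g μ t)
    funext ω
    rw [hYval]
    by_cases h : D f ω = d
    · rw [if_pos h, if_pos (show ω ∈ {ω | D f ω = d} from h)]
    · rw [if_neg h, if_neg (show ω ∉ {ω | D f ω = d} from h)]
  -- counting identities
  have hXcard : ∀ (d : Fin 9) (S : Finset V) (ω : Ω),
      ((Finset.univ.filter
        (fun f : G.edgeSet => (∀ v ∈ (f : Sym2 V), v ∈ S) ∧ D f ω = d)).card : ℝ)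
        = (∑ f ∈ E S, Y d f) ω := by
    intro d S ω
    rw [Finset.sum_apply, ← Finset.filter_filter, Finset.card_filter]
    push_cast
    refine Finset.sum_congr rfl fun f _ => ?_
    by_cases h : D f ω = d <;> simp [hYval, h]
  -- empty induced edge sets for small S
  have hEempty : ∀ S : Finset V, S.card ≤ 1 → E S = ∅ := by
    intro S hS
    rw [hE, Finset.filter_eq_empty_iff]
    rintro ⟨e, he⟩ -
    revert he
    induction e using Sym2.ind with
    | _ a b =>
      intro he hall
      have ha := hall a (Sym2.mem_mk_left a b)
      have hb := hall b (Sym2.mem_mk_right a b)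
      have hadj : G.Adj a b := he
      have : 1 < S.card := Finset.one_lt_card.mpr ⟨a, ha, b, hb, hadj.ne⟩
      omega
  -- the bad events
  set A : Fin 9 → Finset V → Set Ω := fun d S =>
    {ω | C * S.card * Real.log n ≤ ((E S).card : ℝ)
      ∧ ε * (p d * ((E S).card : ℝ))
          < |((Finset.univ.filter
                (fun f : G.edgeSet =>
                  (∀ v ∈ (f : Sym2 V), v ∈ S) ∧ D f ω = d)).card : ℝ)
              - p d * ((E S).card : ℝ)|} with hA
  set b : Finset V → ℝ :=
    fun S => if 2 ≤ S.card then 2 * ((n:ℝ) ^ (6 * S.card))⁻¹ else 0 with hb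
  have hb0 : ∀ S, 0 ≤ b S := by
    intro S
    rw [hb]
    dsimp only
    split <;> positivity
  -- key per-pair bound
  have hAbound : ∀ d S, μ (A d S) ≤ ENNReal.ofReal (b S) := by
    intro d S
    by_cases h2 : 2 ≤ S.card
    · -- Chernoff case (or vacuous if degree condition fails)
      by_cases hdeg : C * S.card * Real.log n ≤ ((E S).card : ℝ)
      · -- main Chernoff estimate
        set m : ℝ := ((E S).card : ℝ) with hm
        have hm0 : 0 ≤ m := Nat.cast_nonneg _
        have hsub : A d S ⊆
            {ω | (1+ε) * (p d * (E S).card) ≤ (∑ f ∈ E S, Y d f) ω}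
            ∪ {ω | (∑ f ∈ E S, Y d f) ω ≤ (1-ε) * (p d * (E S).card)} := by
          intro ω hω
          obtain ⟨-, hdev⟩ := hω
          rw [hXcard d S ω] at hdev
          rcases lt_abs.mp hdev with h | h
          · left
            show (1+ε) * (p d * m) ≤ _
            linarith
          · right
            show _ ≤ (1-ε) * (p d * m)
            linarith
        have hup := chernoff_upper (hYmeas d) (hYindep d) (hp d).le (hp1 d)
          (hY01 d) (hYmgf d) (E S) hε0 hε1
        have hlo := chernoff_lower (hYmeas d) (hYindep d) (hp d).le (hp1 d)
          (hY01 d) (hYmgf d) (E S) hε0 hε1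
        have hup' : μ {ω | (1+ε) * (p d * (E S).card) ≤ (∑ f ∈ E S, Y d f) ω}
            ≤ ENNReal.ofReal (Real.exp (-(ε^2 * (p d * (E S).card)) / 3)) :=
          (ENNReal.le_ofReal_iff_toReal_le (measure_ne_top _ _) (Real.exp_pos _).le).mpr hup
        have hlo' : μ {ω | (∑ f ∈ E S, Y d f) ω ≤ (1-ε) * (p d * (E S).card)}
            ≤ ENNReal.ofReal (Real.exp (-(ε^2 * (p d * (E S).card)) / 3)) :=
          (ENNReal.le_ofReal_iff_toReal_le (measure_ne_top _ _) (Real.exp_pos _).le).mpr hlo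
        have hexp : Real.exp (-(ε^2 * (p d * (E S).card)) / 3) ≤ ((n:ℝ) ^ (6 * S.card))⁻¹ := by
          have hrw : ((n:ℝ) ^ (6 * S.card))⁻¹
              = Real.exp (-((6 * S.card : ℕ) * Real.log n)) := by
            rw [Real.exp_neg, Real.exp_nat_mul, Real.exp_log hn0]
          rw [hrw]
          apply Real.exp_le_exp.mpr
          have hq : δ ≤ p d := hδle d
          have hC18 : δ * ε ^ 2 * C = 18 := by
            rw [hC]
            field_simp
          have h1 : ε^2 * δ * (C * S.card * Real.log n) ≤ ε^2 * δ * m :=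
            mul_le_mul_of_nonneg_left hdeg (by positivity)
          have h2' : ε^2 * δ * m ≤ ε^2 * p d * m :=
            mul_le_mul_of_nonneg_right
              (mul_le_mul_of_nonneg_left hq (sq_nonneg ε)) hm0
          have h3 : ε^2 * δ * (C * (S.card:ℝ) * Real.log n)
              = 18 * ((S.card:ℝ) * Real.log n) := by
            have hre : ε^2 * δ * (C * (S.card:ℝ) * Real.log n)
                = (δ * ε^2 * C) * ((S.card:ℝ) * Real.log n) := by ring
            rw [hre, hC18]
          push_cast
          linarith
        calc μ (A d S) ≤ μ ({ω | (1+ε) * (p d * (E S).card) ≤ (∑ f ∈ E S, Y d f) ω}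
              ∪ {ω | (∑ f ∈ E S, Y d f) ω ≤ (1-ε) * (p d * (E S).card)}) :=
                measure_mono hsub
          _ ≤ μ {ω | (1+ε) * (p d * (E S).card) ≤ (∑ f ∈ E S, Y d f) ω}
              + μ {ω | (∑ f ∈ E S, Y d f) ω ≤ (1-ε) * (p d * (E S).card)} :=
                measure_union_le _ _
          _ ≤ ENNReal.ofReal (Real.exp (-(ε^2 * (p d * (E S).card)) / 3))
              + ENNReal.ofReal (Real.exp (-(ε^2 * (p d * (E S).card)) / 3)) :=
                add_le_add hup' hlo'
          _ = ENNReal.ofReal (2 * Real.exp (-(ε^2 * (p d * (E S).card)) / 3)) := by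
                rw [← ENNReal.ofReal_add (Real.exp_pos _).le (Real.exp_pos _).le]
                ring_nf
          _ ≤ ENNReal.ofReal (b S) := by
                apply ENNReal.ofReal_le_ofReal
                rw [hb]
                dsimp only
                rw [if_pos h2]
                linarith
      · -- degree condition fails: event empty
        have : A d S = ∅ := by
          rw [hA]
          ext ω
          simp only [Set.mem_setOf_eq, Set.mem_empty_iff_false, iff_false, not_and]
          intro h
          exact absurd h hdeg
        rw [this]
        simp [hb0 S]
    · -- |S| ≤ 1 : event empty
      have hle1 : S.card ≤ 1 := by omega
      have hES : E S = ∅ := hEempty S hle1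
      have : A d S = ∅ := by
        rw [hA]
        ext ω
        simp only [Set.mem_setOf_eq, Set.mem_empty_iff_false, iff_false, not_and]
        intro h1 h2'
        rw [hES] at h1
        simp only [Finset.card_empty, Nat.cast_zero] at h1
        have hk0 : (S.card : ℝ) = 0 := by
          by_contra hk
          have hkpos : (0:ℝ) < S.card := lt_of_le_of_ne (Nat.cast_nonneg _) (Ne.symm hk)
          nlinarith [mul_pos (mul_pos hC0 hkpos) hlogn]
        have hX0 : ((Finset.univ.filter
            (fun f : G.edgeSet =>
              (∀ v ∈ (f : Sym2 V), v ∈ S) ∧ D f ω = d)).card : ℝ) = 0 := by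
          have hsub' : (Finset.univ.filter
              (fun f : G.edgeSet =>
                (∀ v ∈ (f : Sym2 V), v ∈ S) ∧ D f ω = d)) ⊆ E S := by
            rw [hE]
            exact Finset.monotone_filter_right _ (fun f _ hf => hf.1)
          rw [hES] at hsub'
          have := Finset.card_le_card hsub'
          simp only [Finset.card_empty, Nat.le_zero] at this
          rw [this]
          norm_cast
        rw [hES] at h2'
        simp only [Finset.card_empty, Nat.cast_zero, mul_zero, sub_zero] at h2'
        rw [hX0] at h2'
        simp at h2'
      rw [this]
      simp [hb0 S]
  -- union bound
  have hevent : {ω | ∃ d : Fin 9, ∃ S : Finset V,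
      C * S.card * Real.log n
          ≤ ((Finset.univ.filter
              (fun f : G.edgeSet => ∀ v ∈ (f : Sym2 V), v ∈ S)).card : ℝ)
      ∧ ε * (p d * ((Finset.univ.filter
              (fun f : G.edgeSet => ∀ v ∈ (f : Sym2 V), v ∈ S)).card : ℝ))
        < |((Finset.univ.filter
              (fun f : G.edgeSet =>
                (∀ v ∈ (f : Sym2 V), v ∈ S) ∧ D f ω = d)).card : ℝ)
            - p d * ((Finset.univ.filter
              (fun f : G.edgeSet => ∀ v ∈ (f : Sym2 V), v ∈ S)).card : ℝ)|}
      = ⋃ (d : Fin 9), ⋃ (S : Finset V), A d S := by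
    ext ω
    simp only [Set.mem_setOf_eq, Set.mem_iUnion, hA, hE, hC]
  have hmain : μ (⋃ (d : Fin 9), ⋃ (S : Finset V), A d S)
      ≤ ∑ d : Fin 9, ∑ S : Finset V, ENNReal.ofReal (b S) := by
    calc μ (⋃ (d : Fin 9), ⋃ (S : Finset V), A d S)
        ≤ ∑' (d : Fin 9), μ (⋃ (S : Finset V), A d S) := measure_iUnion_le _
      _ ≤ ∑' (d : Fin 9), ∑' (S : Finset V), μ (A d S) :=
          ENNReal.tsum_le_tsum (fun d => measure_iUnion_le _)
      _ = ∑ d : Fin 9, ∑ S : Finset V, μ (A d S) := by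
          rw [tsum_fintype]
          exact Finset.sum_congr rfl (fun d _ => tsum_fintype _)
      _ ≤ ∑ d : Fin 9, ∑ S : Finset V, ENNReal.ofReal (b S) :=
          Finset.sum_le_sum (fun d _ => Finset.sum_le_sum (fun S _ => hAbound d S))
  -- convert to a real bound
  have hsum9 : ∑ d : Fin 9, ∑ S : Finset V, ENNReal.ofReal (b S)
      = ENNReal.ofReal (9 * ∑ S : Finset V, b S) := by
    rw [Finset.sum_const, ← ENNReal.ofReal_sum_of_nonneg (fun S _ => hb0 S)]
    rw [Finset.card_univ, Fintype.card_fin, nsmul_eq_mul]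
    rw [ENNReal.ofReal_mul (by norm_num : (0:ℝ) ≤ 9)]
    norm_num
  have hreal : (9:ℝ) * ∑ S : Finset V, b S
      ≤ 18 * ∑ k ∈ Finset.Icc 2 n, (n.choose k : ℝ) * ((n : ℝ) ^ (6 * k))⁻¹ := by
    have hgrp : ∑ S : Finset V, b S
        = ∑ k ∈ Finset.range (n+1),
            n.choose k • (if 2 ≤ k then 2 * ((n:ℝ) ^ (6 * k))⁻¹ else 0) := by
      rw [← Finset.powerset_univ]
      rw [Finset.sum_powerset_apply_card
        (fun k => if 2 ≤ k then 2 * ((n:ℝ) ^ (6 * k))⁻¹ else 0)]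
      rw [Finset.card_univ, hcard]
    have hfil : (Finset.range (n+1)).filter (fun k => 2 ≤ k) = Finset.Icc 2 n := by
      ext k
      simp only [Finset.mem_filter, Finset.mem_range, Finset.mem_Icc]
      omega
    have hstep : ∑ k ∈ Finset.range (n+1),
        n.choose k • (if 2 ≤ k then 2 * ((n:ℝ) ^ (6 * k))⁻¹ else 0)
        = ∑ k ∈ Finset.Icc 2 n, (n.choose k : ℝ) * (2 * ((n:ℝ) ^ (6 * k))⁻¹) := by
      rw [← hfil, Finset.sum_filter]
      refine Finset.sum_congr rfl fun k _ => ?_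
      rw [nsmul_eq_mul]
      split <;> simp
    rw [hgrp, hstep, Finset.mul_sum, Finset.mul_sum]
    apply le_of_eq
    refine Finset.sum_congr rfl fun k _ => ?_
    ring
  rw [hevent]
  have h1' : (μ (⋃ (d : Fin 9), ⋃ (S : Finset V), A d S)).toReal
      ≤ (ENNReal.ofReal (9 * ∑ S : Finset V, b S)).toReal :=
    ENNReal.toReal_mono ENNReal.ofReal_ne_top (hmain.trans (le_of_eq hsum9))
  rw [ENNReal.toReal_ofReal
    (mul_nonneg (by norm_num) (Finset.sum_nonneg fun S _ => hb0 S))] at h1'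
  exact h1'.trans hreal
end

section
/- Let n ≥ 2, let G be a simple graph on a vertex set V with |V| = n, let p : {1,...,9} → ℝ satisfy p_d > 0 for all d and ∑_{d=1}^9 p_d = 1, set δ = min_d p_d, and fix 0 < ε < 1. Assign to each edge f of G an independent random digit D_f ∈ {1,...,9} with P(D_f = d) = p_d. For S ⊆ V let e(S) be the number of edges of G with both endpoints in S, let X_{S,d} count such edges with digit d, and for e(S) > 0 let χ²(S) = ∑_{d=1}^9 (X_{S,d} − p_d·e(S))²/(p_d·e(S)) and ψ(S) = χ²(S)/|S|. Then with probability at least 1 − 18·∑_{k=2}^{n} C(n,k)·n^{−6k}, every nonempty S ⊆ V with e(S) ≥ (18/(δ·ε²))·|S|·log n satisfies ψ(S) ≤ ε²·e(S)/|S|, and in particular ψ(S) ≤ max over nonempty T ⊆ V of e(T)/|T|. -/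
open MeasureTheory ProbabilityTheory
open scoped Classical

set_option maxHeartbeats 1000000

lemma AB.one_le_aux : ∀ x ∈ Set.Ici (0:ℝ), 1 ≤ (1 - x + x^2/2) * Real.exp x := by
  set g : ℝ → ℝ := fun x => (1 - x + x^2/2) * Real.exp x with hg
  have hder : ∀ x : ℝ, HasDerivAt g ((x^2/2) * Real.exp x) x := by
    intro x
    have h1 : HasDerivAt (fun x : ℝ => 1 - x + x^2/2) (-1 + x) x := by
      have := (((hasDerivAt_const x (1:ℝ)).sub (hasDerivAt_id x)).add
        ((hasDerivAt_pow 2 x).div_const 2))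
      refine this.congr_deriv ?_
      push_cast
      ring
    have := h1.mul (Real.hasDerivAt_exp x)
    refine this.congr_deriv ?_
    ring
  have hmono : MonotoneOn g (Set.Ici (0:ℝ)) := by
    apply monotoneOn_of_deriv_nonneg (convex_Ici 0)
    · exact fun x _ => (hder x).continuousAt.continuousWithinAt
    · exact fun x _ => ((hder x).differentiableAt).differentiableWithinAt
    · intro x hx
      rw [(hder x).deriv]
      positivity
  intro x hx
  have := hmono (Set.self_mem_Ici) hx hx
  simpa [g] using this

lemma AB.exp_neg_quad (x : ℝ) (hx : 0 ≤ x) : Real.exp (-x) ≤ 1 - x + x^2/2 := by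
  rw [Real.exp_neg, inv_le_iff_one_le_mul₀ (Real.exp_pos x)]
  exact AB.one_le_aux x hx

lemma AB.exp_cubic (x : ℝ) (hx0 : 0 ≤ x) (hx1 : x ≤ 1) :
    Real.exp x ≤ 1 + x + x^2/2 + (2/9)*x^3 := by
  have h := Real.exp_bound (x := x) (by rw [abs_of_nonneg hx0]; exact hx1) (n := 3) (by norm_num)
  rw [abs_of_nonneg hx0] at h
  have h2 := (abs_sub_le_iff.1 h).1
  have : ∑ m ∈ Finset.range 3, x ^ m / m.factorial = 1 + x + x^2/2 := by
    rw [Finset.sum_range_succ, Finset.sum_range_succ, Finset.sum_range_one]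
    norm_num [Nat.factorial]
  rw [this] at h2
  norm_num [Nat.factorial] at h2
  linarith


private lemma AB.ratio (X kL s : ℝ) (hX0 : 0 ≤ X) (h1 : 18*kL ≤ s*X) (hs3 : s ≤ 1/3) :
    54*kL ≤ X := by nlinarith

lemma AB.upper_exponent (δ p ε e k L : ℝ) (hδ0 : 0 < δ) (hδp : δ ≤ p) (hp1 : p ≤ 1)
    (hδ9 : δ ≤ 1/9) (hε0 : 0 < ε) (hε1 : ε ≤ 1) (hk : 1 ≤ k) (hL : 0 < L)
    (he : 18/(δ*ε^2)*k*L ≤ e) :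
    ∃ θ : ℝ, 0 ≤ θ ∧
      -(θ*(ε*Real.sqrt p*e/3)) + e*(p*(Real.exp θ - 1 - θ)) ≤ -(6*(k*L)) := by
  have hp0 : 0 < p := lt_of_lt_of_le hδ0 hδp
  set s := Real.sqrt δ with hsdef
  set r := Real.sqrt p with hrdef
  have hs0 : 0 < s := Real.sqrt_pos.2 hδ0
  have hr0 : 0 < r := Real.sqrt_pos.2 hp0
  have hs2 : s^2 = δ := Real.sq_sqrt hδ0.le
  have hr2 : r^2 = p := Real.sq_sqrt hp0.le
  have hsr : s ≤ r := Real.sqrt_le_sqrt hδp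
  have hs3 : s ≤ 1/3 := by nlinarith
  have hkL : 0 < k*L := by positivity
  have hee : 18*(k*L) ≤ δ*ε^2*e := by
    have h0 : 0 < δ*ε^2 := by positivity
    rw [div_mul_eq_mul_div, div_mul_eq_mul_div, div_le_iff₀ h0] at he
    nlinarith
  have he0 : 0 < e := by nlinarith [mul_pos hδ0 (pow_pos hε0 2)]
  refine ⟨(3/5)*s*ε/r, by positivity, ?_⟩
  set θ := (3/5)*s*ε/r with hθdef
  have hθ0 : 0 ≤ θ := by positivity
  have hθ1 : θ ≤ 1 := by
    rw [hθdef, div_le_one hr0]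
    nlinarith
  have hexp : Real.exp θ - 1 - θ ≤ θ^2/2 + (2/9)*θ^3 := by
    have := AB.exp_cubic θ hθ0 hθ1
    linarith
  have e1 : θ * (ε*r*e/3) = s*ε^2*e/5 := by
    rw [hθdef]; field_simp
  have e2 : p * θ^2 = (9/25)*(s^2*ε^2) := by
    rw [← hr2, hθdef]; field_simp; ring
  have e3 : p * θ^3 ≤ (27/125)*(s^2*ε^3) := by
    have heq : p * θ^3 = (27/125)*(s^3*ε^3)/r := by
      rw [← hr2, hθdef]; field_simp; ring
    rw [heq, div_le_iff₀ hr0]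
    nlinarith [mul_le_mul_of_nonneg_left hsr
      (by positivity : (0:ℝ) ≤ (27/125)*(s^2*ε^3))]
  have hX : 54*(k*L) ≤ s*ε^2*e := by
    refine AB.ratio _ _ s (by positivity) ?_ hs3
    have hs' : s*(s*ε^2*e) = δ*ε^2*e := by rw [← hs2]; ring
    linarith [hs' ▸ hee]
  have hmain : p*(Real.exp θ - 1 - θ) ≤ (57/250)*(s^2*ε^2) := by
    have h1 := mul_le_mul_of_nonneg_left hexp hp0.le
    have h1' : p*(θ^2/2 + (2/9)*θ^3) = (p*θ^2)/2 + (2/9)*(p*θ^3) := by ring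
    have hε32 : ε^3 ≤ ε^2 := pow_le_pow_of_le_one hε0.le hε1 (by norm_num)
    have h3 : s^2*ε^3 ≤ s^2*ε^2 := mul_le_mul_of_nonneg_left hε32 (sq_nonneg s)
    linarith
  have hfin : e*(p*(Real.exp θ - 1 - θ)) ≤ (19/250)*(s*ε^2*e) := by
    have h4 := mul_le_mul_of_nonneg_left hmain he0.le
    have hss : s^2 ≤ s/3 := by nlinarith
    have h5 : e*((57/250)*(s^2*ε^2)) ≤ (19/250)*(s*ε^2*e) := by
      nlinarith [mul_le_mul_of_nonneg_right hss (by positivity : (0:ℝ) ≤ ε^2*e)]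
    linarith
  rw [e1]
  linarith

lemma AB.lower_exponent (δ p ε e k L : ℝ) (hδ0 : 0 < δ) (hδp : δ ≤ p) (hp1 : p ≤ 1)
    (hδ9 : δ ≤ 1/9) (hε0 : 0 < ε) (hε1 : ε ≤ 1) (hk : 1 ≤ k) (hL : 0 < L)
    (he : 18/(δ*ε^2)*k*L ≤ e) :
    ∃ θ : ℝ, 0 ≤ θ ∧
      -(θ*(ε*Real.sqrt p*e/3)) + e*(p*(Real.exp (-θ) - 1 + θ)) ≤ -(6*(k*L)) := by
  have hp0 : 0 < p := lt_of_lt_of_le hδ0 hδp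
  set r := Real.sqrt p with hrdef
  have hr0 : 0 < r := Real.sqrt_pos.2 hp0
  have hr2 : r^2 = p := Real.sq_sqrt hp0.le
  have hkL : 0 < k*L := by positivity
  have hee : 18*(k*L) ≤ δ*ε^2*e := by
    have h0 : 0 < δ*ε^2 := by positivity
    rw [div_mul_eq_mul_div, div_mul_eq_mul_div, div_le_iff₀ h0] at he
    nlinarith
  have he0 : 0 < e := by nlinarith [mul_pos hδ0 (pow_pos hε0 2)]
  refine ⟨ε/(3*r), by positivity, ?_⟩
  set θ := ε/(3*r) with hθdef
  have hθ0 : 0 ≤ θ := by positivity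
  have hexp : Real.exp (-θ) - 1 + θ ≤ θ^2/2 := by
    have := AB.exp_neg_quad θ hθ0
    linarith
  have e1 : θ * (ε*r*e/3) = ε^2*e/9 := by
    rw [hθdef]; field_simp; ring
  have e2 : p * θ^2 = ε^2/9 := by
    rw [← hr2, hθdef]; field_simp; ring
  have hmain : p*(Real.exp (-θ) - 1 + θ) ≤ ε^2/18 := by
    have h1 := mul_le_mul_of_nonneg_left hexp hp0.le
    have h1' : p*(θ^2/2) = (p*θ^2)/2 := by ring
    linarith
  have hfin : e*(p*(Real.exp (-θ) - 1 + θ)) ≤ ε^2*e/18 := by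
    have h4 := mul_le_mul_of_nonneg_left hmain he0.le
    have : e*(ε^2/18) = ε^2*e/18 := by ring
    linarith
  rw [e1]
  -- need: -(ε^2*e/9) + ε^2*e/18 ≤ -(6*(k*L)),  i.e. ε^2*e/18 ≥ 6kL
  -- from hee : 18 kL ≤ δ ε² e and δ ≤ 1/9 : ε²e ≥ 18kL/δ ≥ 162 kL
  have hX : 162*(k*L) ≤ ε^2*e := by
    nlinarith [mul_le_mul_of_nonneg_right hδ9 (by positivity : (0:ℝ) ≤ ε^2*e)]
  linarith


section Bern
variable {Ω ι : Type*} [MeasurableSpace Ω] {μ : Measure Ω} [IsProbabilityMeasure μ]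
  (B : ι → Ω → ℝ)

lemma AB.mgf_bernoulli (hBmeas : ∀ i, Measurable (B i))
    (h01 : ∀ i ω, B i ω = 0 ∨ B i ω = 1)
    (q : ℝ) (hq : ∀ i, ∫ ω, B i ω ∂μ = q) (i : ι) (s : ℝ) :
    Integrable (fun ω => Real.exp (s * B i ω)) μ ∧
      mgf (B i) μ s = 1 + (Real.exp s - 1) * q := by
  have hBint : Integrable (B i) μ := by
    refine Integrable.mono' (integrable_const 1) (hBmeas i).aestronglyMeasurable ?_
    refine Filter.Eventually.of_forall fun ω => ?_
    rcases h01 i ω with h | h <;> simp [h]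
  have hexp_eq : (fun ω => Real.exp (s * B i ω))
      = fun ω => 1 + (Real.exp s - 1) * B i ω := by
    funext ω
    rcases h01 i ω with h | h <;> simp [h]
  constructor
  · rw [hexp_eq]
    exact (integrable_const 1).add (hBint.const_mul _)
  · rw [mgf]
    calc ∫ ω, Real.exp (s * B i ω) ∂μ = ∫ ω, (1 + (Real.exp s - 1) * B i ω) ∂μ := by
          rw [hexp_eq]
      _ = 1 + (Real.exp s - 1) * q := by
          rw [integral_add (integrable_const 1) (hBint.const_mul _),
            integral_const, integral_const_mul, hq i]
          simp

lemma AB.bernoulli_tails (hBmeas : ∀ i, Measurable (B i))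
    (hindep : iIndepFun B μ)
    (h01 : ∀ i ω, B i ω = 0 ∨ B i ω = 1)
    (q : ℝ) (hq0 : 0 ≤ q) (hq1 : q ≤ 1)
    (hq : ∀ i, ∫ ω, B i ω ∂μ = q)
    (E : Finset ι) (t : ℝ) {θ : ℝ} (hθ : 0 ≤ θ) :
    (μ {ω | q * E.card + t ≤ ∑ i ∈ E, B i ω}).toReal
        ≤ Real.exp (-(θ*t) + E.card * (q * (Real.exp θ - 1 - θ))) ∧
    (μ {ω | (∑ i ∈ E, B i ω) ≤ q * E.card - t}).toReal
        ≤ Real.exp (-(θ*t) + E.card * (q * (Real.exp (-θ) - 1 + θ))) := by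
  have key : ∀ s : ℝ, mgf (∑ i ∈ E, B i) μ s ≤ Real.exp (E.card * (q * (Real.exp s - 1)))
      ∧ Integrable (fun ω => Real.exp (s * (∑ i ∈ E, B i) ω)) μ := by
    intro s
    have hint : Integrable (fun ω => Real.exp (s * (∑ i ∈ E, B i) ω)) μ :=
      hindep.integrable_exp_mul_sum hBmeas
        (fun i _ => (AB.mgf_bernoulli B hBmeas h01 q hq i s).1)
    refine ⟨?_, hint⟩
    rw [hindep.mgf_sum hBmeas E]
    have heach : ∀ i ∈ E, mgf (B i) μ s = 1 + (Real.exp s - 1) * q := fun i _ =>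
      (AB.mgf_bernoulli B hBmeas h01 q hq i s).2
    rw [Finset.prod_congr rfl heach, Finset.prod_const]
    have hfac0 : (0:ℝ) ≤ 1 + (Real.exp s - 1) * q := by
      rcases le_or_gt 1 (Real.exp s) with h | h
      · nlinarith
      · nlinarith [Real.exp_pos s]
    calc (1 + (Real.exp s - 1) * q) ^ E.card
        ≤ (Real.exp (q * (Real.exp s - 1))) ^ E.card := by
          apply pow_le_pow_left₀ hfac0
          have := Real.add_one_le_exp ((Real.exp s - 1) * q)
          calc 1 + (Real.exp s - 1) * q = (Real.exp s - 1) * q + 1 := by ring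
            _ ≤ Real.exp ((Real.exp s - 1) * q) := this
            _ = Real.exp (q * (Real.exp s - 1)) := by rw [mul_comm]
      _ = Real.exp (E.card * (q * (Real.exp s - 1))) := by
          rw [← Real.exp_nat_mul]
  constructor
  · have h := measure_ge_le_exp_mul_mgf (μ := μ) (X := ∑ i ∈ E, B i)
      (q * E.card + t) hθ (key θ).2
    have hset : {ω | q * (E.card:ℝ) + t ≤ (∑ i ∈ E, B i) ω}
        = {ω | q * (E.card:ℝ) + t ≤ ∑ i ∈ E, B i ω} := by
      ext ω; simp [Finset.sum_apply]
    rw [hset] at h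
    refine h.trans ?_
    calc Real.exp (-θ * (q * E.card + t)) * mgf (∑ i ∈ E, B i) μ θ
          ≤ Real.exp (-θ * (q * E.card + t)) * Real.exp (E.card * (q * (Real.exp θ - 1))) :=
            by have := (key θ).1; gcongr
        _ = Real.exp (-(θ*t) + E.card * (q * (Real.exp θ - 1 - θ))) := by
            rw [← Real.exp_add]; congr 1; ring
  · have h := measure_le_le_exp_mul_mgf (μ := μ) (X := ∑ i ∈ E, B i)
      (q * E.card - t) (neg_nonpos.2 hθ) (key (-θ)).2
    have hset : {ω | (∑ i ∈ E, B i) ω ≤ q * (E.card:ℝ) - t}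
        = {ω | (∑ i ∈ E, B i ω) ≤ q * (E.card:ℝ) - t} := by
      ext ω; simp [Finset.sum_apply]
    rw [hset] at h
    refine h.trans ?_
    calc Real.exp (-(-θ) * (q * E.card - t)) * mgf (∑ i ∈ E, B i) μ (-θ)
          ≤ Real.exp (θ * (q * E.card - t)) * Real.exp (E.card * (q * (Real.exp (-θ) - 1))) := by
            rw [neg_neg]
            have := (key (-θ)).1; gcongr
        _ = Real.exp (-(θ*t) + E.card * (q * (Real.exp (-θ) - 1 + θ))) := by
            rw [← Real.exp_add]; congr 1; ring
end Bern


/-- **Corollary 1 of the paper.**  Under the null hypothesis (edge digits are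
i.i.d. from the digit distribution `p`), with probability at least
`1 − 18·∑_{k=2}^{n} C(n,k)·n^(−6k)`, every nonempty `S ⊆ V` with
`e(S) ≥ (18/(δ·ε²))·|S|·log n` has average chi-square score
`ψ(S) = χ²(S)/|S| ≤ ε²·e(S)/|S|`, and in particular `ψ(S)` is at most the
density `max_{T ≠ ∅} e(T)/|T|` of the densest subgraph of `G`. -/
theorem antibenford_corollary
    {V : Type*} [Fintype V] [DecidableEq V]
    (n : ℕ) (hn : 2 ≤ n) (hcard : Fintype.card V = n)
    (G : SimpleGraph V) [DecidableRel G.Adj]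
    {Ω : Type*} [MeasurableSpace Ω] (μ : Measure Ω) [IsProbabilityMeasure μ]
    (p : Fin 9 → ℝ) (hp : ∀ d, 0 < p d) (hsum : ∑ d, p d = 1)
    (δ : ℝ) (hδ : δ = Finset.univ.inf' Finset.univ_nonempty p)
    (ε : ℝ) (hε0 : 0 < ε) (hε1 : ε < 1)
    (D : G.edgeSet → Ω → Fin 9)
    (hmeas : ∀ f, Measurable (D f))
    (hindep : iIndepFun D μ)
    (hdist : ∀ f d, μ {ω | D f ω = d} = ENNReal.ofReal (p d)) :
    1 - 18 * ∑ k ∈ Finset.Icc 2 n, (n.choose k : ℝ) * ((n : ℝ) ^ (6 * k))⁻¹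
      ≤ (μ {ω | ∀ S : Finset V, S.Nonempty →
          (18 / (δ * ε ^ 2)) * S.card * Real.log n
              ≤ ((Finset.univ.filter
                  (fun f : G.edgeSet => ∀ v ∈ (f : Sym2 V), v ∈ S)).card : ℝ) →
          ((∑ d : Fin 9,
              (((Finset.univ.filter
                  (fun f : G.edgeSet =>
                    (∀ v ∈ (f : Sym2 V), v ∈ S) ∧ D f ω = d)).card : ℝ)
                - p d * ((Finset.univ.filter
                  (fun f : G.edgeSet => ∀ v ∈ (f : Sym2 V), v ∈ S)).card : ℝ)) ^ 2
                / (p d * ((Finset.univ.filter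
                  (fun f : G.edgeSet => ∀ v ∈ (f : Sym2 V), v ∈ S)).card : ℝ)))
              / S.card
            ≤ ε ^ 2 * ((Finset.univ.filter
                  (fun f : G.edgeSet => ∀ v ∈ (f : Sym2 V), v ∈ S)).card : ℝ)
                / S.card
          ∧ (∑ d : Fin 9,
              (((Finset.univ.filter
                  (fun f : G.edgeSet =>
                    (∀ v ∈ (f : Sym2 V), v ∈ S) ∧ D f ω = d)).card : ℝ)
                - p d * ((Finset.univ.filter
                  (fun f : G.edgeSet => ∀ v ∈ (f : Sym2 V), v ∈ S)).card : ℝ)) ^ 2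
                / (p d * ((Finset.univ.filter
                  (fun f : G.edgeSet => ∀ v ∈ (f : Sym2 V), v ∈ S)).card : ℝ)))
              / S.card
            ≤ sSup {ρ : ℝ | ∃ T : Finset V, T.Nonempty ∧
                ρ = ((Finset.univ.filter
                  (fun f : G.edgeSet => ∀ v ∈ (f : Sym2 V), v ∈ T)).card : ℝ)
                    / T.card})}).toReal := by
  classical
  have hn0 : (0:ℝ) < (n:ℝ) := by
    have : (0:ℕ) < n := by omega
    exact_mod_cast this
  have hn1 : (1:ℝ) < (n:ℝ) := by exact_mod_cast (by omega : 1 < n)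
  set L := Real.log n with hLdef
  have hL : 0 < L := Real.log_pos hn1
  obtain ⟨d0, -, hd0⟩ := Finset.exists_mem_eq_inf' (Finset.univ_nonempty) p
  have hδ0 : 0 < δ := by rw [hδ, hd0]; exact hp d0
  have hδp : ∀ d, δ ≤ p d := fun d => hδ ▸ Finset.inf'_le p (Finset.mem_univ d)
  have hp1 : ∀ d, p d ≤ 1 := by
    intro d
    rw [← hsum]
    exact Finset.single_le_sum (fun i _ => (hp i).le) (Finset.mem_univ d)
  have hδ9 : δ ≤ 1/9 := by
    have h : ∑ _d : Fin 9, δ ≤ ∑ d, p d := Finset.sum_le_sum (fun d _ => hδp d)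
    rw [hsum] at h
    simp only [Finset.sum_const, Finset.card_univ, Fintype.card_fin, nsmul_eq_mul] at h
    push_cast at h
    linarith
  have hε1' : ε ≤ 1 := hε1.le
  have hδε : 0 < δ * ε ^ 2 := mul_pos hδ0 (pow_pos hε0 2)
  -- definitions
  set ES : Finset V → Finset G.edgeSet :=
    fun S => Finset.univ.filter (fun f : G.edgeSet => ∀ v ∈ (f : Sym2 V), v ∈ S) with hES
  have hESapp : ∀ S : Finset V,
      (Finset.univ.filter (fun f : G.edgeSet => ∀ v ∈ (f : Sym2 V), v ∈ S)) = ES S :=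
    fun _ => rfl
  set B : Fin 9 → G.edgeSet → Ω → ℝ :=
    fun d f => (fun x : Fin 9 => if x = d then (1:ℝ) else 0) ∘ D f with hB
  have hB01 : ∀ d f ω, B d f ω = 0 ∨ B d f ω = 1 := by
    intro d f ω
    by_cases h : D f ω = d <;> simp [hB, h]
  have hBmeas : ∀ d f, Measurable (B d f) := by
    intro d f
    exact (Measurable.of_discrete).comp (hmeas f)
  have hBindep : ∀ d, iIndepFun (B d) μ := by
    intro d
    exact hindep.comp _ (fun f => Measurable.of_discrete)
  have hBmean : ∀ d f, ∫ ω, B d f ω ∂μ = p d := by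
    intro d f
    have hset : MeasurableSet {ω | D f ω = d} := hmeas f (measurableSet_singleton d)
    have hind : (fun ω => B d f ω) = Set.indicator {ω | D f ω = d} (fun _ => (1:ℝ)) := by
      funext ω
      by_cases h : D f ω = d <;> simp [hB, h, Set.indicator_apply]
    rw [hind, MeasureTheory.integral_indicator_const (1:ℝ) hset, measureReal_def, hdist f d,
      ENNReal.toReal_ofReal (hp d).le]
    simp
  -- events
  set Rel : Finset V → Prop :=
    fun S => S.Nonempty ∧ 18 / (δ * ε ^ 2) * S.card * L ≤ ((ES S).card : ℝ) with hRelDef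
  set bad : Finset V → Fin 9 → Set Ω := fun S d =>
    if Rel S then
      {ω | p d * ((ES S).card : ℝ) + ε * Real.sqrt (p d) * ((ES S).card : ℝ) / 3
            ≤ ∑ f ∈ ES S, B d f ω} ∪
      {ω | (∑ f ∈ ES S, B d f ω)
            ≤ p d * ((ES S).card : ℝ) - ε * Real.sqrt (p d) * ((ES S).card : ℝ) / 3}
    else (∅ : Set Ω) with hbad
  set Good : Set Ω := ⋂ (S : Finset V), ⋂ (d : Fin 9), (bad S d)ᶜ with hGoodDef
  have hbadmeas : ∀ S d, MeasurableSet (bad S d) := by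
    intro S d
    have hYmeas : Measurable (fun ω => ∑ f ∈ ES S, B d f ω) :=
      Finset.measurable_sum _ (fun f _ => hBmeas d f)
    rw [hbad]
    dsimp only
    split_ifs
    · exact (measurableSet_le measurable_const hYmeas).union
        (measurableSet_le hYmeas measurable_const)
    · exact MeasurableSet.empty
  have hGoodMeas : MeasurableSet Good :=
    MeasurableSet.iInter fun S => MeasurableSet.iInter fun d => (hbadmeas S d).compl
  -- relevance implies positivity facts
  have hRelFacts : ∀ S, Rel S → (1:ℝ) ≤ S.card ∧ 0 < ((ES S).card : ℝ) := by
    intro S hS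
    obtain ⟨hne, hthr⟩ := hS
    have hk1 : (1:ℝ) ≤ S.card := by exact_mod_cast Finset.card_pos.2 hne
    have h18 : 0 < 18 / (δ * ε ^ 2) := div_pos (by norm_num) hδε
    have hpos : 0 < 18 / (δ * ε ^ 2) * S.card * L :=
      mul_pos (mul_pos h18 (by linarith)) hL
    exact ⟨hk1, lt_of_lt_of_le hpos hthr⟩
  have hRel2 : ∀ S, Rel S → 2 ≤ S.card := by
    intro S hS
    have hpos := (hRelFacts S hS).2
    have : 0 < (ES S).card := by exact_mod_cast hpos
    obtain ⟨f, hf⟩ := Finset.card_pos.1 this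
    have hfS : ∀ v ∈ (f : Sym2 V), v ∈ S := (Finset.mem_filter.1 hf).2
    obtain ⟨q, hq⟩ := f
    induction q using Sym2.ind with
    | _ a b =>
      rw [SimpleGraph.mem_edgeSet] at hq
      have ha : a ∈ S := hfS a (by simp)
      have hb : b ∈ S := hfS b (by simp)
      exact Finset.one_lt_card.2 ⟨a, ha, b, hb, hq.ne⟩
  -- Chernoff bound per (S, d)
  have hbadbound : ∀ S d, μ (bad S d)
      ≤ ENNReal.ofReal (if 2 ≤ S.card then 2 * (((n:ℝ) ^ (6 * S.card))⁻¹) else 0) := by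
    intro S d
    by_cases hR : Rel S
    · rw [if_pos (hRel2 S hR)]
      rw [hbad]
      dsimp only
      rw [if_pos hR]
      obtain ⟨hk1, he0⟩ := hRelFacts S hR
      have hthr : 18 / (δ * ε ^ 2) * S.card * L ≤ ((ES S).card : ℝ) := hR.2
      obtain ⟨θu, hθu0, hθu⟩ := AB.upper_exponent δ (p d) ε ((ES S).card : ℝ) (S.card : ℝ) L
        hδ0 (hδp d) (hp1 d) hδ9 hε0 hε1' hk1 hL hthr
      obtain ⟨θl, hθl0, hθl⟩ := AB.lower_exponent δ (p d) ε ((ES S).card : ℝ) (S.card : ℝ) L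
        hδ0 (hδp d) (hp1 d) hδ9 hε0 hε1' hk1 hL hthr
      have hup := (AB.bernoulli_tails (B d) (hBmeas d) (hBindep d) (hB01 d) (p d)
        (hp d).le (hp1 d) (hBmean d) (ES S)
        (ε * Real.sqrt (p d) * ((ES S).card : ℝ) / 3) hθu0).1
      have hlo := (AB.bernoulli_tails (B d) (hBmeas d) (hBindep d) (hB01 d) (p d)
        (hp d).le (hp1 d) (hBmean d) (ES S)
        (ε * Real.sqrt (p d) * ((ES S).card : ℝ) / 3) hθl0).2
      have hexp_eq : Real.exp (-(6 * ((S.card:ℝ) * L))) = ((n:ℝ) ^ (6 * S.card))⁻¹ := by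
        have h1 : ((n:ℝ) ^ (6 * S.card))⁻¹ = Real.exp (-(((6 * S.card : ℕ):ℝ) * L)) := by
          rw [Real.exp_neg, Real.exp_nat_mul, hLdef, Real.exp_log hn0]
        rw [h1]
        congr 1
        push_cast
        ring
      have hupb : (μ {ω | p d * ((ES S).card:ℝ)
            + ε * Real.sqrt (p d) * ((ES S).card : ℝ) / 3 ≤ ∑ f ∈ ES S, B d f ω}).toReal
          ≤ ((n:ℝ) ^ (6 * S.card))⁻¹ := by
        refine hup.trans ?_
        rw [← hexp_eq]
        exact Real.exp_le_exp.2 hθu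
      have hlob : (μ {ω | (∑ f ∈ ES S, B d f ω) ≤ p d * ((ES S).card:ℝ)
            - ε * Real.sqrt (p d) * ((ES S).card : ℝ) / 3}).toReal
          ≤ ((n:ℝ) ^ (6 * S.card))⁻¹ := by
        refine hlo.trans ?_
        rw [← hexp_eq]
        exact Real.exp_le_exp.2 hθl
      have hb0 : (0:ℝ) ≤ ((n:ℝ) ^ (6 * S.card))⁻¹ := by positivity
      have hup' : μ {ω | p d * ((ES S).card:ℝ)
            + ε * Real.sqrt (p d) * ((ES S).card : ℝ) / 3 ≤ ∑ f ∈ ES S, B d f ω}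
          ≤ ENNReal.ofReal (((n:ℝ) ^ (6 * S.card))⁻¹) :=
        (ENNReal.le_ofReal_iff_toReal_le (measure_ne_top μ _) hb0).2 hupb
      have hlo' : μ {ω | (∑ f ∈ ES S, B d f ω) ≤ p d * ((ES S).card:ℝ)
            - ε * Real.sqrt (p d) * ((ES S).card : ℝ) / 3}
          ≤ ENNReal.ofReal (((n:ℝ) ^ (6 * S.card))⁻¹) :=
        (ENNReal.le_ofReal_iff_toReal_le (measure_ne_top μ _) hb0).2 hlob
      calc μ (_ ∪ _) ≤ _ + _ := measure_union_le _ _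
        _ ≤ ENNReal.ofReal (((n:ℝ) ^ (6 * S.card))⁻¹)
            + ENNReal.ofReal (((n:ℝ) ^ (6 * S.card))⁻¹) := add_le_add hup' hlo'
        _ = ENNReal.ofReal (2 * (((n:ℝ) ^ (6 * S.card))⁻¹)) := by
            rw [← ENNReal.ofReal_add hb0 hb0]
            congr 1
            ring
    · rw [hbad]
      dsimp only
      rw [if_neg hR]
      simp
  -- union bound
  have hcompl : Goodᶜ = ⋃ (S : Finset V), ⋃ (d : Fin 9), bad S d := by
    rw [hGoodDef]
    simp [Set.compl_iInter]
  have hGc : μ Goodᶜ ≤ ∑ S : Finset V, ∑ d : Fin 9, μ (bad S d) := by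
    rw [hcompl]
    refine (measure_iUnion_le _).trans ?_
    rw [tsum_fintype]
    refine Finset.sum_le_sum fun S _ => ?_
    refine (measure_iUnion_le _).trans ?_
    rw [tsum_fintype]
  have hsum_nonneg : (0:ℝ) ≤ ∑ k ∈ Finset.Icc 2 n, (n.choose k : ℝ) * ((n : ℝ) ^ (6 * k))⁻¹ := by
    refine Finset.sum_nonneg fun k _ => ?_
    positivity
  have hregroup : (∑ S : Finset V, (if 2 ≤ S.card then (((n:ℝ) ^ (6 * S.card))⁻¹) else 0))
      = ∑ k ∈ Finset.Icc 2 n, (n.choose k : ℝ) * ((n : ℝ) ^ (6 * k))⁻¹ := by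
    have h1 : (Finset.univ : Finset (Finset V)) = (Finset.univ : Finset V).powerset :=
      Finset.powerset_univ.symm
    rw [h1]
    rw [Finset.sum_powerset_apply_card (fun m => if 2 ≤ m then (((n:ℝ) ^ (6 * m))⁻¹) else 0)]
    rw [Finset.card_univ, hcard]
    rw [show Finset.range (n+1) = Finset.Icc 0 n by rw [Finset.range_eq_Ico]; rfl]
    rw [← Finset.sum_subset (Finset.Icc_subset_Icc_left (by omega : 0 ≤ 2))]
    · refine Finset.sum_congr rfl fun k hk => ?_
      rw [Finset.mem_Icc] at hk
      rw [if_pos hk.1, nsmul_eq_mul]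
    · intro k hk hk2
      rw [Finset.mem_Icc] at hk
      rw [Finset.mem_Icc] at hk2
      have : ¬ (2 ≤ k) := by omega
      rw [if_neg this]
      simp
  have hGc2 : μ Goodᶜ ≤ ENNReal.ofReal
      (18 * ∑ k ∈ Finset.Icc 2 n, (n.choose k : ℝ) * ((n : ℝ) ^ (6 * k))⁻¹) := by
    refine hGc.trans ?_
    have hstep : ∀ S : Finset V, ∑ d : Fin 9, μ (bad S d)
        ≤ ENNReal.ofReal (18 * (if 2 ≤ S.card then (((n:ℝ) ^ (6 * S.card))⁻¹) else 0)) := by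
      intro S
      have hc0 : (0:ℝ) ≤ (if 2 ≤ S.card then (((n:ℝ) ^ (6 * S.card))⁻¹) else 0) := by
        split_ifs <;> positivity
      calc ∑ d : Fin 9, μ (bad S d)
          ≤ ∑ _d : Fin 9, ENNReal.ofReal
              (2 * (if 2 ≤ S.card then (((n:ℝ) ^ (6 * S.card))⁻¹) else 0)) := by
            refine Finset.sum_le_sum fun d _ => ?_
            refine (hbadbound S d).trans ?_
            split_ifs <;> simp [ENNReal.ofReal_le_ofReal_iff, mul_nonneg, hc0]
        _ = ENNReal.ofReal (18 * (if 2 ≤ S.card then (((n:ℝ) ^ (6 * S.card))⁻¹) else 0)) := by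
            rw [Finset.sum_const, Finset.card_univ, Fintype.card_fin, nsmul_eq_mul]
            rw [show ((9:ℕ) : ENNReal) = ENNReal.ofReal (9:ℝ) by simp]
            rw [← ENNReal.ofReal_mul (by norm_num)]
            congr 1
            ring
    calc ∑ S : Finset V, ∑ d : Fin 9, μ (bad S d)
        ≤ ∑ S : Finset V, ENNReal.ofReal
            (18 * (if 2 ≤ S.card then (((n:ℝ) ^ (6 * S.card))⁻¹) else 0)) :=
          Finset.sum_le_sum fun S _ => hstep S
      _ = ENNReal.ofReal (∑ S : Finset V,
            18 * (if 2 ≤ S.card then (((n:ℝ) ^ (6 * S.card))⁻¹) else 0)) := by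
          rw [ENNReal.ofReal_sum_of_nonneg]
          intro S _
          split_ifs <;> positivity
      _ = ENNReal.ofReal
          (18 * ∑ k ∈ Finset.Icc 2 n, (n.choose k : ℝ) * ((n : ℝ) ^ (6 * k))⁻¹) := by
          rw [← Finset.mul_sum, hregroup]
  -- deterministic inclusion
  have hsub : Good ⊆ {ω | ∀ S : Finset V, S.Nonempty →
          (18 / (δ * ε ^ 2)) * S.card * Real.log n
              ≤ ((Finset.univ.filter
                  (fun f : G.edgeSet => ∀ v ∈ (f : Sym2 V), v ∈ S)).card : ℝ) →
          ((∑ d : Fin 9,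
              (((Finset.univ.filter
                  (fun f : G.edgeSet =>
                    (∀ v ∈ (f : Sym2 V), v ∈ S) ∧ D f ω = d)).card : ℝ)
                - p d * ((Finset.univ.filter
                  (fun f : G.edgeSet => ∀ v ∈ (f : Sym2 V), v ∈ S)).card : ℝ)) ^ 2
                / (p d * ((Finset.univ.filter
                  (fun f : G.edgeSet => ∀ v ∈ (f : Sym2 V), v ∈ S)).card : ℝ)))
              / S.card
            ≤ ε ^ 2 * ((Finset.univ.filter
                  (fun f : G.edgeSet => ∀ v ∈ (f : Sym2 V), v ∈ S)).card : ℝ)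
                / S.card
          ∧ (∑ d : Fin 9,
              (((Finset.univ.filter
                  (fun f : G.edgeSet =>
                    (∀ v ∈ (f : Sym2 V), v ∈ S) ∧ D f ω = d)).card : ℝ)
                - p d * ((Finset.univ.filter
                  (fun f : G.edgeSet => ∀ v ∈ (f : Sym2 V), v ∈ S)).card : ℝ)) ^ 2
                / (p d * ((Finset.univ.filter
                  (fun f : G.edgeSet => ∀ v ∈ (f : Sym2 V), v ∈ S)).card : ℝ)))
              / S.card
            ≤ sSup {ρ : ℝ | ∃ T : Finset V, T.Nonempty ∧
                ρ = ((Finset.univ.filter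
                  (fun f : G.edgeSet => ∀ v ∈ (f : Sym2 V), v ∈ T)).card : ℝ)
                    / T.card})} := by
    intro ω hω
    simp only [hGoodDef, Set.mem_iInter, Set.mem_compl_iff] at hω
    simp only [Set.mem_setOf_eq]
    intro S hSne hthr
    rw [hESapp S] at hthr ⊢
    have hRS : Rel S := ⟨hSne, hthr⟩
    obtain ⟨hk1, he0⟩ := hRelFacts S hRS
    have hcard0 : (0:ℝ) < S.card := by linarith
    -- per-digit deviation bounds
    have hgood : ∀ d : Fin 9, |(∑ f ∈ ES S, B d f ω) - p d * ((ES S).card:ℝ)|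
        ≤ ε * Real.sqrt (p d) * ((ES S).card : ℝ) / 3 := by
      intro d
      have h := hω S d
      rw [hbad] at h
      dsimp only at h
      rw [if_pos hRS] at h
      simp only [Set.mem_union, Set.mem_setOf_eq, not_or, not_le] at h
      rw [abs_le]
      constructor <;> [linarith [h.2]; linarith [h.1]]
    -- counting identity
    have hXc : ∀ d : Fin 9, ((Finset.univ.filter
          (fun f : G.edgeSet => (∀ v ∈ (f : Sym2 V), v ∈ S) ∧ D f ω = d)).card : ℝ)
        = ∑ f ∈ ES S, B d f ω := by
      intro d
      have hff : Finset.univ.filter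
          (fun f : G.edgeSet => (∀ v ∈ (f : Sym2 V), v ∈ S) ∧ D f ω = d)
          = (ES S).filter (fun f => D f ω = d) := by
        rw [hES]
        rw [Finset.filter_filter]
      rw [hff, Finset.card_filter]
      push_cast
      refine Finset.sum_congr rfl fun f _ => ?_
      rw [hB]
      simp [Function.comp]
    simp only [hXc]
    -- chi-square estimate
    have hterm : ∀ d : Fin 9, ((∑ f ∈ ES S, B d f ω) - p d * ((ES S).card:ℝ))^2
        / (p d * ((ES S).card:ℝ)) ≤ ε^2 * ((ES S).card:ℝ) / 9 := by
      intro d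
      have h1 := hgood d
      have ht0 : (0:ℝ) ≤ ε * Real.sqrt (p d) * ((ES S).card : ℝ) / 3 :=
        div_nonneg (mul_nonneg (mul_nonneg hε0.le (Real.sqrt_nonneg _)) (Nat.cast_nonneg _)) (by norm_num)
      have h2 : ((∑ f ∈ ES S, B d f ω) - p d * ((ES S).card:ℝ))^2
          ≤ (ε * Real.sqrt (p d) * ((ES S).card : ℝ) / 3)^2 := by
        rw [abs_le] at h1
        nlinarith [h1.1, h1.2]
      have ht2 : (ε * Real.sqrt (p d) * ((ES S).card : ℝ) / 3)^2
          = ε^2 * p d * ((ES S).card:ℝ)^2 / 9 := by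
        have hs : Real.sqrt (p d) ^ 2 = p d := Real.sq_sqrt (hp d).le
        rw [div_pow, mul_pow, mul_pow, hs]
        ring
      have hpe : (0:ℝ) < p d * ((ES S).card:ℝ) := mul_pos (hp d) he0
      rw [div_le_iff₀ hpe]
      rw [ht2] at h2
      have hgoal : ε^2 * ((ES S).card:ℝ) / 9 * (p d * ((ES S).card:ℝ))
          = ε^2 * p d * ((ES S).card:ℝ)^2 / 9 := by ring
      rw [hgoal]
      exact h2
    have hchi : (∑ d : Fin 9, ((∑ f ∈ ES S, B d f ω) - p d * ((ES S).card:ℝ))^2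
        / (p d * ((ES S).card:ℝ))) ≤ ε^2 * ((ES S).card:ℝ) := by
      calc (∑ d : Fin 9, ((∑ f ∈ ES S, B d f ω) - p d * ((ES S).card:ℝ))^2
          / (p d * ((ES S).card:ℝ)))
          ≤ ∑ _d : Fin 9, ε^2 * ((ES S).card:ℝ) / 9 :=
            Finset.sum_le_sum fun d _ => hterm d
        _ = ε^2 * ((ES S).card:ℝ) := by
            rw [Finset.sum_const, Finset.card_univ, Fintype.card_fin, nsmul_eq_mul]
            ring
    have hfirst : (∑ d : Fin 9, ((∑ f ∈ ES S, B d f ω) - p d * ((ES S).card:ℝ))^2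
        / (p d * ((ES S).card:ℝ))) / S.card ≤ ε^2 * ((ES S).card:ℝ) / S.card :=
      div_le_div_of_nonneg_right hchi hcard0.le
    constructor
    · exact hfirst
    · have h2 : ε^2 * ((ES S).card:ℝ) / S.card ≤ ((ES S).card:ℝ) / S.card := by
        have hle : ε^2 * ((ES S).card:ℝ) ≤ ((ES S).card:ℝ) := by
          nlinarith [mul_nonneg (mul_nonneg (sub_nonneg.2 hε1') (by linarith : (0:ℝ) ≤ 1+ε)) he0.le]
        exact div_le_div_of_nonneg_right hle hcard0.le
      have hmem : ((ES S).card:ℝ) / S.card ∈ {ρ : ℝ | ∃ T : Finset V, T.Nonempty ∧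
          ρ = ((Finset.univ.filter
            (fun f : G.edgeSet => ∀ v ∈ (f : Sym2 V), v ∈ T)).card : ℝ) / T.card} :=
        ⟨S, hSne, by rw [hESapp S]⟩
      have hbdd : BddAbove {ρ : ℝ | ∃ T : Finset V, T.Nonempty ∧
          ρ = ((Finset.univ.filter
            (fun f : G.edgeSet => ∀ v ∈ (f : Sym2 V), v ∈ T)).card : ℝ) / T.card} := by
        refine Set.Finite.bddAbove ?_
        refine Set.Finite.subset (Set.finite_range (fun T : Finset V =>
          ((Finset.univ.filter
            (fun f : G.edgeSet => ∀ v ∈ (f : Sym2 V), v ∈ T)).card : ℝ) / T.card)) ?_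
        rintro ρ ⟨T, -, rfl⟩
        exact ⟨T, rfl⟩
      refine hfirst.trans (h2.trans (le_csSup hbdd hmem))
  -- conclusion
  have hfinal1 : (μ Good).toReal + (μ Goodᶜ).toReal = 1 := by
    rw [← ENNReal.toReal_add (measure_ne_top μ _) (measure_ne_top μ _),
      measure_add_measure_compl hGoodMeas]
    simp
  have hGcReal : (μ Goodᶜ).toReal
      ≤ 18 * ∑ k ∈ Finset.Icc 2 n, (n.choose k : ℝ) * ((n : ℝ) ^ (6 * k))⁻¹ := by
    have h := ENNReal.toReal_mono ENNReal.ofReal_ne_top hGc2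
    rwa [ENNReal.toReal_ofReal (by linarith)] at h
  have hmono := ENNReal.toReal_mono (measure_ne_top μ _) (measure_mono hsub)
  have hGoodReal : 1 - 18 * ∑ k ∈ Finset.Icc 2 n, (n.choose k : ℝ) * ((n : ℝ) ^ (6 * k))⁻¹
      ≤ (μ Good).toReal := by linarith
  exact hGoodReal.trans hmono
end
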